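/- Next Fit Decreasing Height (NFDH) packing guarantee in 2D: if rectangles with widths w_i ≤ 1 and heights h_i ≤ 1 are packed by NFDH into a strip of width 1, and NFDH uses levels of heights h^{(1)} ≥ h^{(2)} ≥ ... ≥ h^{(l)}, then the total area of rectangles packed in level j is at least (1 − w_max)·h^{(j+1)}, where w_max is the maximum rectangle width; consequently the total packed area is at least (1 − w_max)·(H − h^{(1)}) where H = Σ_j h^{(j)}. -/

import Mathlib

/-- NFDH guarantee in 2D.  Rectangles `(w i, h i)` with `w i ≤ wmax ≤ 1` are packed by
NFDH into a strip of width 1 using levels `0, …, L-1` with nonincreasing level heights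
`levH`; every closed level (all but the last) has total rectangle width exceeding
`1 − wmax`, and every rectangle in level `j` has height at least `levH (j+1)`.
Then the area packed in level `j` is at least `(1 − wmax) * levH (j+1)` for each
non-last level `j`, and the total packed area is at least
`(1 − wmax) * (H − levH 0)` where `H = Σ_j levH j`. -/
theorem NFDH_area_guarantee (n L : ℕ) (hL : 1 ≤ L)
    (w h : Fin n → ℝ) (wmax : ℝ) (lev : Fin n → ℕ) (levH : ℕ → ℝ)
    (hwmax : wmax ≤ 1)
    (hw : ∀ i, 0 < w i ∧ w i ≤ wmax) (hh : ∀ i, 0 < h i ∧ h i ≤ 1)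
    (hlev : ∀ i, lev i < L)
    (hmono : ∀ j j' : ℕ, j ≤ j' → levH j' ≤ levH j)
    (hnonneg : ∀ j, 0 ≤ levH j) (hzero : ∀ j, L ≤ j → levH j = 0)
    (hclosed : ∀ j, j + 1 < L →
      1 - wmax < ∑ i ∈ Finset.univ.filter (fun i => lev i = j), w i)
    (hheight : ∀ i, levH (lev i + 1) ≤ h i) :
    (∀ j, j + 1 < L →
      (1 - wmax) * levH (j + 1) ≤
        ∑ i ∈ Finset.univ.filter (fun i => lev i = j), w i * h i) ∧
    (1 - wmax) * ((∑ j ∈ Finset.range L, levH j) - levH 0) ≤ ∑ i, w i * h i := by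
  have key : ∀ j, j + 1 < L →
      (1 - wmax) * levH (j + 1) ≤
        ∑ i ∈ Finset.univ.filter (fun i => lev i = j), w i * h i := by
    intro j hj
    calc (1 - wmax) * levH (j + 1)
        ≤ (∑ i ∈ Finset.univ.filter (fun i => lev i = j), w i) * levH (j + 1) :=
          mul_le_mul_of_nonneg_right (le_of_lt (hclosed j hj)) (hnonneg _)
      _ = ∑ i ∈ Finset.univ.filter (fun i => lev i = j), w i * levH (j + 1) := by
          rw [Finset.sum_mul]
      _ ≤ ∑ i ∈ Finset.univ.filter (fun i => lev i = j), w i * h i := by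
          apply Finset.sum_le_sum
          intro i hi
          simp only [Finset.mem_filter] at hi
          exact mul_le_mul_of_nonneg_left (hi.2 ▸ hheight i) (hw i).1.le
  refine ⟨key, ?_⟩
  have hsplit : ∑ i, w i * h i =
      ∑ j ∈ Finset.range L, ∑ i ∈ Finset.univ.filter (fun i => lev i = j), w i * h i := by
    rw [Finset.sum_fiberwise_of_maps_to (fun i _ => Finset.mem_range.mpr (hlev i))]
  have hshift : (∑ j ∈ Finset.range L, levH j) - levH 0 =
      ∑ j ∈ Finset.range (L - 1), levH (j + 1) := by
    have : ∑ j ∈ Finset.range L, levH j = ∑ j ∈ Finset.range (L - 1), levH (j + 1) + levH 0 := by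
      have hL' : L - 1 + 1 = L := by omega
      rw [← hL', Finset.sum_range_succ']; simp
    rw [this]; ring
  rw [hsplit, hshift, Finset.mul_sum]
  calc ∑ j ∈ Finset.range (L - 1), (1 - wmax) * levH (j + 1)
      ≤ ∑ j ∈ Finset.range (L - 1),
          ∑ i ∈ Finset.univ.filter (fun i => lev i = j), w i * h i := by
        apply Finset.sum_le_sum
        intro j hj
        exact key j (by simp at hj; omega)
    _ ≤ ∑ j ∈ Finset.range L,
          ∑ i ∈ Finset.univ.filter (fun i => lev i = j), w i * h i := by
        apply Finset.sum_le_sum_of_subset_of_nonneg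
        · intro j hj; simp at *; omega
        · intro j _ _
          apply Finset.sum_nonneg
          intro i _
          exact mul_nonneg (hw i).1.le (hh i).1.le
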